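/- Formal existence and uniqueness for first-order differential equations (power-series counterpart of the Leroux–Viennot theorem): let R be a commutative ring which is a ℚ-algebra and let G be a formal power series in the two variables z, y over R. Then there exists exactly one formal power series S in z over R with zero constant coefficient whose formal derivative satisfies S′ = G(z, S). -/

import Mathlib

/-- Substitution of a family `s` of one-variable formal power series (each intended to have
zero constant coefficient) into a multivariate formal power series `H` in `k` variables:
the coefficient of `z^n` in `H(s)` is the (finite) sum over all monomials `d` of the
coefficient of `d` in `H` times the coefficient of `z^n` in `∏ j, (s j) ^ (d j)`.
When every `s j` has zero constant coefficient, only monomials `d` with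
`∑ j, d j ≤ n` (in particular `d ≤ (n, …, n)`) can contribute, so this is the usual
well-defined substitution. -/
noncomputable def mvSubst {R : Type*} [CommSemiring R] {k : ℕ}
    (H : MvPowerSeries (Fin k) R) (s : Fin k → PowerSeries R) : PowerSeries R :=
  PowerSeries.mk fun n =>
    ∑ d ∈ Finset.Iic (Finsupp.equivFunOnFinite.symm fun _ : Fin k => n),
      MvPowerSeries.coeff d H * PowerSeries.coeff n (∏ j, (s j) ^ (d j))

open PowerSeries
lemma mvSubst_coeff_congr {R : Type*} [CommRing R] (G : MvPowerSeries (Fin 2) R)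
    {S T : PowerSeries R} {n : ℕ} (h : ∀ i ≤ n, coeff i S = coeff i T) :
    coeff n (mvSubst G ![PowerSeries.X, S]) = coeff n (mvSubst G ![PowerSeries.X, T]) := by
  simp only [mvSubst, coeff_mk]
  refine Finset.sum_congr rfl fun d _ => ?_
  congr 1
  have hdvd : (PowerSeries.X : R⟦X⟧) ^ (n + 1) ∣ S - T := by
    rw [X_pow_dvd_iff]
    intro m hm
    rw [map_sub, h m (Nat.lt_succ_iff.mp hm), sub_self]
  have hdvd2 : (PowerSeries.X : R⟦X⟧) ^ (n + 1) ∣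
      (∏ j, (![PowerSeries.X, S] j) ^ (d j)) - (∏ j, (![PowerSeries.X, T] j) ^ (d j)) := by
    simp only [Fin.prod_univ_two, Matrix.cons_val_zero, Matrix.cons_val_one, Matrix.head_cons]
    rw [← mul_sub]
    exact Dvd.dvd.mul_left (hdvd.trans (sub_dvd_pow_sub_pow S T (d 1))) _
  have := (X_pow_dvd_iff.mp hdvd2) n (Nat.lt_succ_self n)
  rw [map_sub, sub_eq_zero] at this
  exact this

noncomputable def odeSol {R : Type*} [CommRing R] [Algebra ℚ R]
    (G : MvPowerSeries (Fin 2) R) : ℕ → R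
  | 0 => 0
  | (n+1) => algebraMap ℚ R ((n+1 : ℚ)⁻¹) *
      coeff n (mvSubst G ![PowerSeries.X,
        PowerSeries.mk (fun i => if _ : i < n + 1 then odeSol G i else 0)])
  termination_by n => n

lemma cancel_succ {R : Type*} [CommRing R] [Algebra ℚ R] {n : ℕ} {x y : R}
    (h : ((n + 1 : ℕ) : R) * x = ((n + 1 : ℕ) : R) * y) : x = y := by
  have h1 : algebraMap ℚ R ((n+1 : ℚ)⁻¹) * (((n + 1 : ℕ)) : R) = 1 := by
    rw [← map_natCast (algebraMap ℚ R) (n+1), ← map_mul,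
      show ((n+1:ℕ):ℚ) = (n:ℚ)+1 by push_cast; ring,
      inv_mul_cancel₀ (by positivity), map_one]
  calc x = algebraMap ℚ R ((n+1 : ℚ)⁻¹) * (((n + 1 : ℕ)) : R) * x := by rw [h1, one_mul]
    _ = algebraMap ℚ R ((n+1 : ℚ)⁻¹) * (((n + 1 : ℕ)) : R) * y := by
        rw [mul_assoc, h, mul_assoc]
    _ = y := by rw [h1, one_mul]

lemma odeSol_succ {R : Type*} [CommRing R] [Algebra ℚ R]
    (G : MvPowerSeries (Fin 2) R) (n : ℕ) :
    ((n + 1 : ℕ) : R) * odeSol G (n+1) =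
      coeff n (mvSubst G ![PowerSeries.X, PowerSeries.mk (odeSol G)]) := by
  rw [odeSol]
  have hcongr : coeff n (mvSubst G ![PowerSeries.X,
        PowerSeries.mk (fun i => if _ : i < n + 1 then odeSol G i else 0)])
      = coeff n (mvSubst G ![PowerSeries.X, PowerSeries.mk (odeSol G)]) := by
    apply mvSubst_coeff_congr
    intro i hi
    simp [coeff_mk, Nat.lt_succ_iff.mpr hi]
    exact fun h => absurd h (by omega)
  rw [hcongr, ← mul_assoc, ← map_natCast (algebraMap ℚ R) (n+1), ← map_mul,
    show ((n+1:ℕ):ℚ) = (n:ℚ)+1 by push_cast; ring,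
    mul_inv_cancel₀ (by positivity), map_one, one_mul]

/-- **Formal existence and uniqueness for first-order differential equations** (power-series
counterpart of the Leroux–Viennot theorem).  Over a commutative `ℚ`-algebra `R`, for any
two-variable formal power series `G` (variables indexed by `Fin 2`, `0` being `z` and `1`
being `y`), there is exactly one formal power series `S` in `z` with zero constant
coefficient satisfying `S' = G(z, S)`. -/
theorem formal_ode_existence_uniqueness {R : Type*} [CommRing R] [Algebra ℚ R]
    (G : MvPowerSeries (Fin 2) R) :
    ∃! S : PowerSeries R, PowerSeries.constantCoeff S = 0 ∧
      PowerSeries.derivativeFun S = mvSubst G ![PowerSeries.X, S] := by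
  refine ⟨PowerSeries.mk (odeSol G), ⟨?_, ?_⟩, ?_⟩
  · rw [← coeff_zero_eq_constantCoeff_apply, coeff_mk, odeSol]
  · ext n
    rw [(show ∀ f : R⟦X⟧, f.derivativeFun = derivative R f from fun _ => rfl), coeff_derivative, coeff_mk]
    have := odeSol_succ G n
    push_cast at this ⊢
    rw [mul_comm] at this
    exact this
  · rintro T ⟨hT0, hTode⟩
    ext n
    rw [coeff_mk]
    induction n using Nat.strong_induction_on with
    | _ n ih =>
      match n with
      | 0 => rw [coeff_zero_eq_constantCoeff_apply, hT0, odeSol]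
      | (m+1) =>
        apply cancel_succ (n := m)
        have h1 : coeff m (mvSubst G ![PowerSeries.X, T]) =
            coeff m (mvSubst G ![PowerSeries.X, PowerSeries.mk (odeSol G)]) := by
          apply mvSubst_coeff_congr
          intro i hi
          rw [coeff_mk]
          exact ih i (Nat.lt_succ_of_le hi)
        have h2 : coeff m (mvSubst G ![PowerSeries.X, T]) =
            ((m + 1 : ℕ) : R) * coeff (m+1) T := by
          rw [← hTode, (show ∀ f : R⟦X⟧, f.derivativeFun = derivative R f from fun _ => rfl), coeff_derivative, mul_comm]
          push_cast
          ring
        rw [← h2, h1, ← odeSol_succ G m]
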